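/- (Descent and rank feasibility of the rank-constrained iteration, Gaussian case) Let Y ∈ ℝ^{n×m}, X ∈ ℝ^{n×p} with ρ = ‖X‖₂² ≤ 1, let 1 ≤ r ≤ min(p,m) and η ≥ 0. Starting from any B⁽⁰⁾ ∈ ℝ^{p×m}, define iteratively B⁽ʲ⁺¹⁾ = Θ^{#σ}( B⁽ʲ⁾ + XᵀY − XᵀXB⁽ʲ⁾ ; r, η ). Then for F(B) = ‖Y−XB‖_F²/2 + (η/2)‖B‖_F², the sequence F(B⁽ʲ⁾) is nonincreasing with F(B⁽ʲ⁾) − F(B⁽ʲ⁺¹⁾) ≥ (1−ρ)‖B⁽ʲ⁾ − B⁽ʲ⁺¹⁾‖_F²/2 for all j ≥ 1, and rank(B⁽ʲ⁾) ≤ r for all j ≥ 1. -/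

import Mathlib

open Matrix

/-- Squared Frobenius norm of a real matrix. -/
def frobSq {n m : ℕ} (A : Matrix (Fin n) (Fin m) ℝ) : ℝ := ∑ i, ∑ j, A i j ^ 2

/-- `(U, σ, V)` is a (reduced) singular value decomposition of the real `n × m` matrix `B`. -/
def IsSVD {n m k : ℕ} (B : Matrix (Fin n) (Fin m) ℝ) (U : Matrix (Fin n) (Fin k) ℝ)
    (σ : Fin k → ℝ) (V : Matrix (Fin m) (Fin k) ℝ) : Prop :=
  Uᵀ * U = 1 ∧ Vᵀ * V = 1 ∧ Antitone σ ∧ (∀ i, 0 ≤ σ i) ∧ B = U * diagonal σ * Vᵀ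

/-- The squared spectral norm `‖X‖₂²` of a real matrix. -/
noncomputable def spectralNormSq {n p : ℕ} (X : Matrix (Fin n) (Fin p) ℝ) : ℝ :=
  ‖LinearMap.toContinuousLinearMap (Matrix.toEuclideanLin X)‖ ^ 2

noncomputable def mip {n m : ℕ} (A B : Matrix (Fin n) (Fin m) ℝ) : ℝ := (Aᵀ * B).trace

lemma mip_eq_sum {n m : ℕ} (A B : Matrix (Fin n) (Fin m) ℝ) :
    mip A B = ∑ i, ∑ j, A i j * B i j := by
  simp [mip, Matrix.trace, Matrix.diag, Matrix.mul_apply]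
  rw [Finset.sum_comm]

lemma frobSq_eq_mip {n m : ℕ} (A : Matrix (Fin n) (Fin m) ℝ) : frobSq A = mip A A := by
  simp [frobSq, mip_eq_sum, sq]

lemma mip_comm {n m : ℕ} (A B : Matrix (Fin n) (Fin m) ℝ) : mip A B = mip B A := by
  simp [mip_eq_sum, mul_comm]

lemma mip_sub_left {n m : ℕ} (A B C : Matrix (Fin n) (Fin m) ℝ) :
    mip (A - B) C = mip A C - mip B C := by
  simp [mip, transpose_sub, Matrix.sub_mul, trace_sub]

lemma mip_sub_right {n m : ℕ} (A B C : Matrix (Fin n) (Fin m) ℝ) :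
    mip A (B - C) = mip A B - mip A C := by
  simp [mip, Matrix.mul_sub, trace_sub]

lemma frobSq_sub {n m : ℕ} (A B : Matrix (Fin n) (Fin m) ℝ) :
    frobSq (A - B) = frobSq A - 2 * mip A B + frobSq B := by
  rw [frobSq_eq_mip, frobSq_eq_mip, frobSq_eq_mip, mip_sub_left, mip_sub_right, mip_sub_right,
    mip_comm B A]
  ring

lemma frobSq_nonneg {n m : ℕ} (A : Matrix (Fin n) (Fin m) ℝ) : 0 ≤ frobSq A := by
  apply Finset.sum_nonneg; intro i _
  exact Finset.sum_nonneg fun j _ => sq_nonneg _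

lemma frobSq_UDV {p m k : ℕ} (U : Matrix (Fin p) (Fin k) ℝ) (V : Matrix (Fin m) (Fin k) ℝ)
    (hU : Uᵀ * U = 1) (hV : Vᵀ * V = 1) (d : Fin k → ℝ) :
    frobSq (U * diagonal d * Vᵀ) = ∑ i, d i ^ 2 := by
  rw [frobSq_eq_mip, mip]
  have : (U * diagonal d * Vᵀ)ᵀ * (U * diagonal d * Vᵀ)
      = V * (diagonal d * ((Uᵀ * U) * (diagonal d * Vᵀ))) := by
    simp only [transpose_mul, transpose_transpose, diagonal_transpose, Matrix.mul_assoc]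
  rw [this, hU, Matrix.one_mul, ← Matrix.mul_assoc, ← Matrix.mul_assoc,
    trace_mul_comm, Matrix.mul_assoc, ← Matrix.mul_assoc, hV, Matrix.one_mul,
    diagonal_mul_diagonal, trace_diagonal]
  simp [sq]

lemma contraction {p k : ℕ} (U : Matrix (Fin p) (Fin k) ℝ) (hU : Uᵀ * U = 1)
    (x : Fin p → ℝ) : ∑ l, (Uᵀ *ᵥ x) l ^ 2 ≤ ∑ i, x i ^ 2 := by
  set v : Fin k → ℝ := Uᵀ *ᵥ x with hv
  set w : Fin p → ℝ := x - U *ᵥ v with hw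
  have hxUv : x ⬝ᵥ (U *ᵥ v) = v ⬝ᵥ v := by
    rw [dotProduct_mulVec, ← Matrix.mulVec_transpose]
  have hUvUv : (U *ᵥ v) ⬝ᵥ (U *ᵥ v) = v ⬝ᵥ v := by
    rw [dotProduct_mulVec, ← Matrix.mulVec_transpose, Matrix.mulVec_mulVec, hU, Matrix.one_mulVec]
  have hww : w ⬝ᵥ w = x ⬝ᵥ x - v ⬝ᵥ v := by
    simp only [hw, sub_dotProduct, dotProduct_sub, hxUv, hUvUv,
      dotProduct_comm (U *ᵥ v) x]
    ring
  have h0 : 0 ≤ w ⬝ᵥ w := Finset.sum_nonneg fun i _ => mul_self_nonneg _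
  have : v ⬝ᵥ v ≤ x ⬝ᵥ x := by linarith [hww ▸ h0]
  simpa [dotProduct, sq] using this

lemma card_filter_lt {k r : ℕ} (hrk : r ≤ k) :
    (Finset.univ.filter (fun i : Fin k => (i : ℕ) < r)).card = r := by
  have : (Finset.univ.filter (fun i : Fin k => (i : ℕ) < r))
      = Finset.image (Fin.castLE hrk) Finset.univ := by
    ext i
    simp only [Finset.mem_filter, Finset.mem_univ, true_and, Finset.mem_image]
    constructor
    · intro h; exact ⟨⟨i, h⟩, Fin.ext rfl⟩
    · rintro ⟨j, rfl⟩; exact j.isLt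
  rw [this, Finset.card_image_of_injective _ (Fin.castLE_injective hrk)]
  simp

lemma rearrange {k r : ℕ} (hr1 : 1 ≤ r) (hrk : r ≤ k) (s : Fin k → ℝ)
    (hs : Antitone s) (hs0 : ∀ i, 0 ≤ s i) (g : Fin k → ℝ)
    (hg0 : ∀ i, 0 ≤ g i) (hg1 : ∀ i, g i ≤ 1) (hgs : ∑ i, g i ≤ r) :
    ∑ i : Fin k, s i ^ 2 * g i ≤ ∑ i : Fin k, (if (i : ℕ) < r then s i ^ 2 else 0) := by
  have hr1k : r - 1 < k := by omega
  set t : ℝ := s ⟨r - 1, hr1k⟩ ^ 2 with ht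
  have ht0 : 0 ≤ t := sq_nonneg _
  have key : ∀ i : Fin k, s i ^ 2 * g i - (if (i : ℕ) < r then s i ^ 2 else 0)
      ≤ t * g i - (if (i : ℕ) < r then t else 0) := by
    intro i
    by_cases h : (i : ℕ) < r
    · simp only [if_pos h]
      have hle : t ≤ s i ^ 2 := by
        have : s ⟨r - 1, hr1k⟩ ≤ s i := hs (by simp [Fin.le_def]; omega)
        exact pow_le_pow_left₀ (hs0 _) this 2
      nlinarith [hg1 i]
    · simp only [if_neg h]
      have hle : s i ^ 2 ≤ t := by
        have : s i ≤ s ⟨r - 1, hr1k⟩ := hs (by simp [Fin.le_def]; omega)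
        exact pow_le_pow_left₀ (hs0 _) this 2
      nlinarith [hg0 i]
  have hsum := Finset.sum_le_sum (fun i (_ : i ∈ Finset.univ) => key i)
  rw [Finset.sum_sub_distrib, Finset.sum_sub_distrib] at hsum
  have hconst : ∑ i : Fin k, (if (i : ℕ) < r then t else 0) = t * r := by
    rw [← Finset.sum_filter, Finset.sum_const, card_filter_lt hrk, nsmul_eq_mul, mul_comm]
  have htg : ∑ i : Fin k, t * g i ≤ t * r := by
    rw [← Finset.mul_sum]
    exact mul_le_mul_of_nonneg_left hgs ht0
  linarith

lemma mip_smul_left {n m : ℕ} (c : ℝ) (A B : Matrix (Fin n) (Fin m) ℝ) :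
    mip (c • A) B = c * mip A B := by
  simp [mip_eq_sum, Finset.mul_sum, mul_assoc]

lemma frobSq_smul {n m : ℕ} (c : ℝ) (A : Matrix (Fin n) (Fin m) ℝ) :
    frobSq (c • A) = c ^ 2 * frobSq A := by
  simp [frobSq, Finset.mul_sum, mul_pow]

lemma trace_conj {m k : ℕ} (V : Matrix (Fin m) (Fin k) ℝ) (hV : Vᵀ * V = 1)
    (M : Matrix (Fin k) (Fin k) ℝ) : (V * M * Vᵀ).trace = M.trace := by
  rw [trace_mul_comm, ← Matrix.mul_assoc, hV, Matrix.one_mul]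

lemma kyfan {p m k r : ℕ} (hr1 : 1 ≤ r) (hrk : r ≤ k)
    (U : Matrix (Fin p) (Fin k) ℝ) (s : Fin k → ℝ) (V : Matrix (Fin m) (Fin k) ℝ)
    (hU : Uᵀ * U = 1) (hV : Vᵀ * V = 1) (hsa : Antitone s) (hs0 : ∀ i, 0 ≤ s i)
    (W : Matrix (Fin p) (Fin k) ℝ) (hW : Wᵀ * W = 1) :
    frobSq ((W * diagonal (fun i : Fin k => if (i : ℕ) < r then (1:ℝ) else 0) * Wᵀ)
        * (U * diagonal s * Vᵀ))
      ≤ ∑ i : Fin k, (if (i : ℕ) < r then s i ^ 2 else 0) := by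
  set e : Fin k → ℝ := fun i => if (i : ℕ) < r then (1:ℝ) else 0 with he
  set P : Matrix (Fin p) (Fin p) ℝ := W * diagonal e * Wᵀ with hP
  have hee : ∀ i, e i * e i = e i := by intro i; simp only [he]; split <;> simp
  have hPt : Pᵀ = P := by
    simp only [hP, transpose_mul, transpose_transpose, diagonal_transpose, Matrix.mul_assoc]
  have hPP : P * P = P := by
    simp only [hP, Matrix.mul_assoc]
    rw [← Matrix.mul_assoc Wᵀ W, hW, Matrix.one_mul, ← Matrix.mul_assoc (diagonal e),
      diagonal_mul_diagonal]
    simp only [hee]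
  set G : Matrix (Fin k) (Fin k) ℝ := Uᵀ * (P * U) with hG
  -- frobSq (P * A) = ∑ i, s i ^ 2 * G i i
  have hfrob : frobSq (P * (U * diagonal s * Vᵀ)) = ∑ i : Fin k, s i ^ 2 * G i i := by
    rw [frobSq_eq_mip, mip]
    have h1 : (P * (U * diagonal s * Vᵀ))ᵀ * (P * (U * diagonal s * Vᵀ))
        = V * (diagonal s * (G * diagonal s)) * Vᵀ := by
      simp only [transpose_mul, transpose_transpose, diagonal_transpose, hPt, Matrix.mul_assoc]
      rw [← Matrix.mul_assoc P P, hPP]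
      simp only [hG, Matrix.mul_assoc]
    rw [h1, trace_conj V hV, Matrix.trace]
    apply Finset.sum_congr rfl
    intro i _
    simp [Matrix.diag, Matrix.diagonal_mul, Matrix.mul_diagonal, sq]
    ring
  rw [hfrob]
  -- entries of G
  set H : Matrix (Fin k) (Fin k) ℝ := diagonal e * (Wᵀ * U) with hH
  have hGH : G = Hᵀ * H := by
    simp only [hH, hG, hP, transpose_mul, transpose_transpose, diagonal_transpose,
      Matrix.mul_assoc]
    rw [← Matrix.mul_assoc (diagonal e) (diagonal e), diagonal_mul_diagonal]
    simp only [hee]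
  have hGdiag : ∀ i, G i i = ∑ l, H l i ^ 2 := by
    intro i
    rw [hGH]
    simp [Matrix.mul_apply, sq]
  have hG0 : ∀ i, 0 ≤ G i i := by
    intro i; rw [hGdiag]; exact Finset.sum_nonneg fun l _ => sq_nonneg _
  have hHsq : ∀ l i, H l i ^ 2 = e l ^ 2 * (Wᵀ * U) l i ^ 2 := by
    intro l i
    simp [hH, Matrix.diagonal_mul, mul_pow]
  have hUcol : ∀ i : Fin k, ∑ a, U a i ^ 2 = 1 := by
    intro i
    have := congrFun (congrFun hU i) i
    simpa [Matrix.mul_apply, Matrix.one_apply, sq] using this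
  have hWcol : ∀ l : Fin k, ∑ a, W a l ^ 2 = 1 := by
    intro l
    have := congrFun (congrFun hW l) l
    simpa [Matrix.mul_apply, Matrix.one_apply, sq] using this
  have hG1 : ∀ i, G i i ≤ 1 := by
    intro i
    rw [hGdiag]
    have h2 : ∀ l, H l i ^ 2 ≤ (Wᵀ * U) l i ^ 2 := by
      intro l
      rw [hHsq]
      have : e l ^ 2 ≤ 1 := by simp only [he]; split <;> norm_num
      nlinarith [sq_nonneg ((Wᵀ * U) l i)]
    calc ∑ l, H l i ^ 2 ≤ ∑ l, (Wᵀ * U) l i ^ 2 := Finset.sum_le_sum fun l _ => h2 l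
      _ = ∑ l, (Wᵀ *ᵥ (fun a => U a i)) l ^ 2 := by
          apply Finset.sum_congr rfl; intro l _; simp [Matrix.mul_apply, Matrix.mulVec, dotProduct]
      _ ≤ ∑ a, U a i ^ 2 := contraction W hW _
      _ = 1 := hUcol i
  have hGsum : ∑ i, G i i ≤ (r : ℝ) := by
    have : ∀ l : Fin k, ∑ i, H l i ^ 2 ≤ e l ^ 2 := by
      intro l
      have h3 : ∑ i, (Wᵀ * U) l i ^ 2 ≤ 1 := by
        calc ∑ i, (Wᵀ * U) l i ^ 2 = ∑ i, (Uᵀ *ᵥ (fun a => W a l)) i ^ 2 := by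
              apply Finset.sum_congr rfl; intro i _
              simp [Matrix.mul_apply, Matrix.mulVec, dotProduct, mul_comm]
          _ ≤ ∑ a, W a l ^ 2 := contraction U hU _
          _ = 1 := hWcol l
      calc ∑ i, H l i ^ 2 = e l ^ 2 * ∑ i, (Wᵀ * U) l i ^ 2 := by
            rw [Finset.mul_sum]; exact Finset.sum_congr rfl fun i _ => hHsq l i
        _ ≤ e l ^ 2 * 1 := by
            apply mul_le_mul_of_nonneg_left h3 (sq_nonneg _)
        _ = e l ^ 2 := mul_one _
    calc ∑ i, G i i = ∑ i, ∑ l, H l i ^ 2 := Finset.sum_congr rfl fun i _ => hGdiag i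
      _ = ∑ l, ∑ i, H l i ^ 2 := Finset.sum_comm
      _ ≤ ∑ l, e l ^ 2 := Finset.sum_le_sum fun l _ => this l
      _ = (r : ℝ) := by
          have : ∀ l : Fin k, e l ^ 2 = if (l : ℕ) < r then (1:ℝ) else 0 := by
            intro l; simp only [he]; split <;> norm_num
          rw [Finset.sum_congr rfl fun l _ => this l, ← Finset.sum_filter,
            Finset.sum_const, card_filter_lt hrk, nsmul_eq_mul, mul_one]
  exact rearrange hr1 hrk s hsa hs0 (fun i => G i i) hG0 hG1 hGsum

lemma eckart_young {p m k r : ℕ} (hr1 : 1 ≤ r) (hrk : r ≤ k) (η : ℝ) (hη : 0 ≤ η)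
    (A : Matrix (Fin p) (Fin m) ℝ)
    (U : Matrix (Fin p) (Fin k) ℝ) (s : Fin k → ℝ) (V : Matrix (Fin m) (Fin k) ℝ)
    (hU : Uᵀ * U = 1) (hV : Vᵀ * V = 1) (hsa : Antitone s) (hs0 : ∀ i, 0 ≤ s i)
    (hA : A = U * diagonal s * Vᵀ)
    (C : Matrix (Fin p) (Fin m) ℝ)
    (W : Matrix (Fin p) (Fin k) ℝ) (γ : Fin k → ℝ) (Z : Matrix (Fin m) (Fin k) ℝ)
    (hW : Wᵀ * W = 1) (hZ : Zᵀ * Z = 1) (hγ : ∀ i : Fin k, ¬ ((i : ℕ) < r) → γ i = 0)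
    (hC : C = W * diagonal γ * Zᵀ) :
    frobSq (U * diagonal (fun i : Fin k => if (i : ℕ) < r then s i / (1 + η) else 0) * Vᵀ - A)
        + η * frobSq (U * diagonal (fun i : Fin k => if (i : ℕ) < r then s i / (1 + η) else 0) * Vᵀ)
      ≤ frobSq (C - A) + η * frobSq C := by
  have h1η : (0:ℝ) < 1 + η := by linarith
  set τ : Fin k → ℝ := fun i => if (i : ℕ) < r then s i / (1 + η) else 0 with hτ
  set Bp : Matrix (Fin p) (Fin m) ℝ := U * diagonal τ * Vᵀ with hBp
  set Sr : ℝ := ∑ i : Fin k, (if (i : ℕ) < r then s i ^ 2 else 0) with hSr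
  -- LHS value
  have hBpA : Bp - A = U * diagonal (fun i => τ i - s i) * Vᵀ := by
    rw [hBp, hA, ← Matrix.sub_mul, ← Matrix.mul_sub, diagonal_sub]
  have hLHS : frobSq (Bp - A) + η * frobSq Bp = (∑ i, s i ^ 2) - Sr / (1 + η) := by
    rw [hBpA, frobSq_UDV U V hU hV, hBp, frobSq_UDV U V hU hV, hSr]
    rw [Finset.mul_sum, ← Finset.sum_add_distrib, Finset.sum_div, ← Finset.sum_sub_distrib]
    apply Finset.sum_congr rfl
    intro i _
    simp only [hτ]
    split
    · field_simp
      ring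
    · simp
  -- projection P fixes C
  set e : Fin k → ℝ := fun i => if (i : ℕ) < r then (1:ℝ) else 0 with he
  set P : Matrix (Fin p) (Fin p) ℝ := W * diagonal e * Wᵀ with hP
  have hPC : P * C = C := by
    rw [hP, hC]
    simp only [Matrix.mul_assoc]
    rw [← Matrix.mul_assoc Wᵀ W, hW, Matrix.one_mul, ← Matrix.mul_assoc (diagonal e),
      diagonal_mul_diagonal]
    congr 2
    apply congrArg
    funext i
    by_cases h : (i : ℕ) < r
    · simp [he, h]
    · simp [he, h, hγ i h]
  have hPt : Pᵀ = P := by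
    simp only [hP, transpose_mul, transpose_transpose, diagonal_transpose, Matrix.mul_assoc]
  -- mip C A = mip C (P * A)
  have hmipCA : mip C A = mip C (P * A) := by
    conv_lhs => rw [← hPC]
    rw [mip, mip, transpose_mul, hPt, Matrix.mul_assoc]
  -- Cauchy-Schwarz-type bound
  have hCS : 2 * mip C (P * A) ≤ (1 + η) * frobSq C + frobSq (P * A) / (1 + η) := by
    have h0 := frobSq_nonneg ((1 + η) • C - (P * A))
    rw [frobSq_sub, frobSq_smul, mip_smul_left] at h0
    rw [← sub_nonneg]
    have heq : (1 + η) * frobSq C + frobSq (P * A) / (1 + η) - 2 * mip C (P * A)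
        = ((1 + η) ^ 2 * frobSq C - 2 * ((1 + η) * mip C (P * A)) + frobSq (P * A)) / (1 + η) := by
      field_simp
      ring
    rw [heq]
    exact div_nonneg h0 h1η.le
  have hKF : frobSq (P * A) ≤ Sr := by
    rw [hA, hSr]
    exact kyfan hr1 hrk U s V hU hV hsa hs0 W hW
  have hmip : 2 * mip C A ≤ (1 + η) * frobSq C + Sr / (1 + η) := by
    rw [hmipCA]
    have : frobSq (P * A) / (1 + η) ≤ Sr / (1 + η) := by
      gcongr
    linarith
  -- RHS expansion
  have hRHS : frobSq (C - A) + η * frobSq C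
      = (1 + η) * frobSq C - 2 * mip C A + (∑ i, s i ^ 2) := by
    rw [frobSq_sub, hA, frobSq_UDV U V hU hV]
    ring
  rw [hLHS, hRHS]
  linarith
lemma frobSq_mul_le {n p m : ℕ} (X : Matrix (Fin n) (Fin p) ℝ)
    (D : Matrix (Fin p) (Fin m) ℝ) :
    frobSq (X * D) ≤ spectralNormSq X * frobSq D := by
  set T := LinearMap.toContinuousLinearMap (Matrix.toEuclideanLin X) with hT
  have hcol : ∀ j : Fin m, ∑ i, (X * D) i j ^ 2 ≤ ‖T‖ ^ 2 * ∑ l, D l j ^ 2 := by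
    intro j
    set x : Fin p → ℝ := fun l => D l j with hx
    set v : EuclideanSpace ℝ (Fin p) := (WithLp.equiv 2 _).symm x with hv
    have h1 : ‖T v‖ ≤ ‖T‖ * ‖v‖ := T.le_opNorm v
    have h2 : ‖T v‖ ^ 2 ≤ (‖T‖ * ‖v‖) ^ 2 := pow_le_pow_left₀ (norm_nonneg _) h1 2
    have hTv : ‖T v‖ ^ 2 = ∑ i, (X *ᵥ x) i ^ 2 := by
      have : T v = (WithLp.equiv 2 (Fin n → ℝ)).symm (X *ᵥ x) := by
        rw [hT, hv]
        simp [Matrix.toEuclideanLin_apply_piLp_toLp]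
      rw [this, EuclideanSpace.norm_eq, Real.sq_sqrt (by positivity)]
      simp [sq_abs]
    have hvn : ‖v‖ ^ 2 = ∑ l, x l ^ 2 := by
      rw [hv, EuclideanSpace.norm_eq, Real.sq_sqrt (by positivity)]
      simp [sq_abs]
    have hXD : ∀ i, (X * D) i j = (X *ᵥ x) i := by
      intro i; simp [Matrix.mul_apply, Matrix.mulVec, dotProduct, hx]
    calc ∑ i, (X * D) i j ^ 2 = ∑ i, (X *ᵥ x) i ^ 2 := by
          exact Finset.sum_congr rfl fun i _ => by rw [hXD]
      _ = ‖T v‖ ^ 2 := hTv.symm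
      _ ≤ (‖T‖ * ‖v‖) ^ 2 := h2
      _ = ‖T‖ ^ 2 * ∑ l, x l ^ 2 := by rw [mul_pow, hvn]
  have hcomm : frobSq (X * D) = ∑ j, ∑ i, (X * D) i j ^ 2 := Finset.sum_comm
  have hcomm2 : frobSq D = ∑ j, ∑ l, D l j ^ 2 := Finset.sum_comm
  rw [hcomm, spectralNormSq, hcomm2, Finset.mul_sum]
  exact Finset.sum_le_sum fun j _ => hcol j

lemma frobSq_neg_sub {n m : ℕ} (A B : Matrix (Fin n) (Fin m) ℝ) :
    frobSq (A - B) = frobSq (B - A) := by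
  simp only [frobSq, Matrix.sub_apply]
  apply Finset.sum_congr rfl; intro i _
  apply Finset.sum_congr rfl; intro j _
  ring

/-- Descent and rank feasibility of the rank-constrained iteration (Gaussian case):
with `ρ = ‖X‖₂² ≤ 1`, `1 ≤ r ≤ min(p,m)`, `η ≥ 0`, and iterates
`B⁽ʲ⁺¹⁾ = Θ^{#σ}(B⁽ʲ⁾ + XᵀY − XᵀXB⁽ʲ⁾; r, η)` (the quantile thresholding keeps the `r`
largest singular values of the argument, given via an SVD `(U j, σ j, V j)` at each step,
shrunk by `1+η`), the objective `F(B) = ‖Y−XB‖_F²/2 + (η/2)‖B‖_F²` is nonincreasing with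
`F(B⁽ʲ⁾) − F(B⁽ʲ⁺¹⁾) ≥ (1−ρ)‖B⁽ʲ⁾ − B⁽ʲ⁺¹⁾‖_F²/2` for all `j ≥ 1`, and
`rank(B⁽ʲ⁾) ≤ r` for all `j ≥ 1`. -/
theorem descent_rank_constrained_iteration {n p m : ℕ}
    (Y : Matrix (Fin n) (Fin m) ℝ) (X : Matrix (Fin n) (Fin p) ℝ)
    (ρ : ℝ) (hρdef : ρ = spectralNormSq X) (hρ : ρ ≤ 1)
    (r : ℕ) (hr1 : 1 ≤ r) (hr2 : r ≤ min p m) (η : ℝ) (hη : 0 ≤ η)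
    (B : ℕ → Matrix (Fin p) (Fin m) ℝ)
    (U : ℕ → Matrix (Fin p) (Fin (min p m)) ℝ)
    (σ : ℕ → Fin (min p m) → ℝ)
    (V : ℕ → Matrix (Fin m) (Fin (min p m)) ℝ)
    (hSVD : ∀ j : ℕ, IsSVD (B j + Xᵀ * Y - Xᵀ * X * B j) (U j) (σ j) (V j))
    (hiter : ∀ j : ℕ, B (j + 1)
      = U j * diagonal (fun i : Fin (min p m) => if (i : ℕ) < r then σ j i / (1 + η) else 0)
        * (V j)ᵀ) :
    (∀ j : ℕ,
      (frobSq (Y - X * B (j + 1)) / 2 + η / 2 * frobSq (B (j + 1)))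
          - (frobSq (Y - X * B (j + 2)) / 2 + η / 2 * frobSq (B (j + 2)))
        ≥ (1 - ρ) * frobSq (B (j + 1) - B (j + 2)) / 2) ∧
    (∀ j : ℕ, 1 ≤ j → (B j).rank ≤ r) := by
  have hk : r ≤ min p m := hr2
  constructor
  · intro j
    -- notation
    obtain ⟨hU1, hV1, hsa, hs0, hAeq⟩ := hSVD (j + 1)
    obtain ⟨hW1, hZ1, -, -, -⟩ := hSVD j
    set γj : Fin (min p m) → ℝ :=
      fun i => if (i : ℕ) < r then σ j i / (1 + η) else 0 with hγj
    have hγ0 : ∀ i : Fin (min p m), ¬ ((i : ℕ) < r) → γj i = 0 := by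
      intro i h; simp [hγj, h]
    have hbC : B (j + 1) = U j * diagonal γj * (V j)ᵀ := hiter j
    have hEY := eckart_young hr1 hk η hη (B (j+1) + Xᵀ * Y - Xᵀ * X * B (j+1))
      (U (j+1)) (σ (j+1)) (V (j+1)) hU1 hV1 hsa hs0 hAeq (B (j+1))
      (U j) γj (V j) hW1 hZ1 hγ0 hbC
    rw [← hiter (j+1)] at hEY
    set b := B (j + 1) with hb
    set b' := B (j + 2) with hb'
    set Dm : Matrix (Fin p) (Fin m) ℝ := Xᵀ * Y - Xᵀ * X * b with hDm
    have e1 : b' - (b + Xᵀ * Y - Xᵀ * X * b) = (b' - b) - Dm := by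
      rw [hDm]; abel
    have e2 : b - (b + Xᵀ * Y - Xᵀ * X * b) = (0 : Matrix (Fin p) (Fin m) ℝ) - Dm := by
      rw [hDm]; abel
    have hz : frobSq (0 : Matrix (Fin p) (Fin m) ℝ) = 0 := by simp [frobSq]
    have hz2 : mip (0 : Matrix (Fin p) (Fin m) ℝ) Dm = 0 := by simp [mip_eq_sum]
    rw [e1, e2, frobSq_sub (b' - b) Dm, frobSq_sub 0 Dm, hz, hz2] at hEY
    -- hEY : frobSq (b' - b) - 2 * mip (b' - b) Dm + frobSq Dm + η * frobSq b'
    --       ≤ 0 - 0 + frobSq Dm + η * frobSq b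
    set Δ : Matrix (Fin p) (Fin m) ℝ := b' - b with hΔ
    have e3 : Y - X * b' = (Y - X * b) - X * Δ := by
      rw [hΔ, Matrix.mul_sub]; abel
    have e4 : mip (Y - X * b) (X * Δ) = mip Δ Dm := by
      have t1 : mip (Y - X * b) (X * Δ) = mip (Xᵀ * (Y - X * b)) Δ := by
        rw [mip, mip, transpose_mul, transpose_transpose, Matrix.mul_assoc]
      rw [t1]
      have t2 : Xᵀ * (Y - X * b) = Dm := by
        rw [hDm, Matrix.mul_sub, Matrix.mul_assoc]
      rw [t2, mip_comm]
    have hsp : frobSq (X * Δ) ≤ ρ * frobSq Δ := by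
      rw [hρdef]; exact frobSq_mul_le X Δ
    have hgoalsub : frobSq (b - b') = frobSq Δ := by rw [hΔ, frobSq_neg_sub]
    rw [ge_iff_le, e3, frobSq_sub (Y - X * b) (X * Δ), e4, hgoalsub]
    linarith
  · intro j hj
    obtain ⟨j', rfl⟩ : ∃ j', j = j' + 1 := ⟨j - 1, by omega⟩
    rw [hiter j']
    set w : Fin (min p m) → ℝ :=
      fun i => if (i : ℕ) < r then σ j' i / (1 + η) else 0 with hw
    calc (U j' * diagonal w * (V j')ᵀ).rank
        ≤ (U j' * diagonal w).rank := Matrix.rank_mul_le_left _ _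
      _ ≤ (diagonal w).rank := Matrix.rank_mul_le_right _ _
      _ ≤ r := by
          rw [Matrix.rank_diagonal]
          have : ∀ i : Fin (min p m), w i ≠ 0 → (i : ℕ) < r := by
            intro i h
            by_contra hc
            exact h (by simp [hw, hc])
          have hinj : Function.Injective
              (fun x : {i : Fin (min p m) // w i ≠ 0} => (⟨(x.1 : ℕ), this x.1 x.2⟩ : Fin r)) := by
            intro a b hab
            apply Subtype.ext
            apply Fin.ext
            simpa [Fin.ext_iff] using hab
          calc Fintype.card {i : Fin (min p m) // w i ≠ 0}
              ≤ Fintype.card (Fin r) := Fintype.card_le_of_injective _ hinj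
            _ = r := Fintype.card_fin r
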